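/- The set 𝔐₀ = {x ∈ 𝔐 : tr(x) = 0 and Sc(x) = 0} is a 2-dimensional F-subspace of 𝔐, and moreover it is an ideal of 𝔐 (closed under multiplication by arbitrary elements of 𝔐). -/

import Mathlib

/-- The rock-paper-scissors monad algebra: coordinates w.r.t. the basis `{1, P, R, S}`. -/
def RPS (F : Type*) := F × F × F × F

namespace RPS

variable {F : Type*} [Field F]

instance : AddCommGroup (RPS F) := inferInstanceAs (AddCommGroup (F × F × F × F))
instance : Module F (RPS F) := inferInstanceAs (Module F (F × F × F × F))

/-- Build the element `x0·1 + a·P + b·R + c·S`. -/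
def mk4 (x0 a b c : F) : RPS F := (x0, a, b, c)

/-- Scalar part: coefficient of `1`. -/
def sc (x : RPS F) : F := x.1
/-- Coefficient of `P`. -/
def cP (x : RPS F) : F := x.2.1
/-- Coefficient of `R`. -/
def cR (x : RPS F) : F := x.2.2.1
/-- Coefficient of `S`. -/
def cS (x : RPS F) : F := x.2.2.2

instance : One (RPS F) := ⟨mk4 1 0 0 0⟩

/-- The commutative non-associative multiplication determined by: `1` is the unit,
`P, R, S` are idempotent, and `P·R = R·P = P`, `P·S = S·P = S`, `S·R = R·S = R`. -/
instance : Mul (RPS F) :=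
  ⟨fun x y => mk4 (sc x * sc y)
    (sc x * cP y + sc y * cP x + cP x * cP y + cP x * cR y + cR x * cP y)
    (sc x * cR y + sc y * cR x + cR x * cR y + cR x * cS y + cS x * cR y)
    (sc x * cS y + sc y * cS x + cS x * cS y + cP x * cS y + cS x * cP y)⟩

/-- The basis element `P`. -/
def eP : RPS F := mk4 0 1 0 0
/-- The basis element `R`. -/
def eR : RPS F := mk4 0 0 1 0
/-- The basis element `S`. -/
def eS : RPS F := mk4 0 0 0 1

/-- The trace homomorphism `tr(x0·1 + aP + bR + cS) = x0 + a + b + c`. -/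
def tr (x : RPS F) : F := sc x + cP x + cR x + cS x

/-- The linear map `φ` with `1 ↦ 1`, `P ↦ R`, `R ↦ S`, `S ↦ P`. -/
def phi (x : RPS F) : RPS F := mk4 (sc x) (cS x) (cP x) (cR x)

lemma tr_add' (x y : RPS F) : tr (x + y) = tr x + tr y := by
  obtain ⟨x0, x1, x2, x3⟩ := x; obtain ⟨y0, y1, y2, y3⟩ := y
  show (x0 + y0) + (x1 + y1) + (x2 + y2) + (x3 + y3) = _
  show _ = (x0 + x1 + x2 + x3) + (y0 + y1 + y2 + y3)
  ring

lemma sc_add' (x y : RPS F) : sc (x + y) = sc x + sc y := rfl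

lemma tr_smul' (c : F) (x : RPS F) : tr (c • x) = c * tr x := by
  obtain ⟨x0, x1, x2, x3⟩ := x
  show c * x0 + c * x1 + c * x2 + c * x3 = c * (x0 + x1 + x2 + x3)
  ring

lemma sc_smul' (c : F) (x : RPS F) : sc (c • x) = c * sc x := rfl

lemma mul_def' (x y : RPS F) : x * y = mk4 (sc x * sc y)
    (sc x * cP y + sc y * cP x + cP x * cP y + cP x * cR y + cR x * cP y)
    (sc x * cR y + sc y * cR x + cR x * cR y + cR x * cS y + cS x * cR y)
    (sc x * cS y + sc y * cS x + cS x * cS y + cP x * cS y + cS x * cP y) := rfl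

/-- The subspace `𝔐₀`. -/
def M0 : Submodule F (RPS F) where
  carrier := {x | tr x = 0 ∧ sc x = 0}
  add_mem' := by
    rintro x y ⟨hx, hx'⟩ ⟨hy, hy'⟩
    refine ⟨?_, ?_⟩
    · rw [tr_add', hx, hy, add_zero]
    · rw [sc_add', hx', hy', add_zero]
  zero_mem' := by exact ⟨by show (0 : F) + 0 + 0 + 0 = 0; simp, rfl⟩
  smul_mem' := by
    rintro c x ⟨hx, hx'⟩
    exact ⟨by rw [tr_smul', hx, mul_zero], by rw [sc_smul', hx', mul_zero]⟩

/-- Linear equivalence `𝔐₀ ≃ F²`. -/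
def e : (M0 : Submodule F (RPS F)) ≃ₗ[F] F × F where
  toFun x := (cP x.1, cR x.1)
  map_add' x y := rfl
  map_smul' c x := rfl
  invFun p := ⟨(0, p.1, p.2, -p.1 - p.2), by
    refine ⟨?_, rfl⟩
    show (0 : F) + p.1 + p.2 + (-p.1 - p.2) = 0
    ring⟩
  left_inv := by
    rintro ⟨⟨x0, x1, x2, x3⟩, hx, hx'⟩
    have hx0 : x0 = 0 := hx'
    have h3 : x3 = -x1 - x2 := by
      have : x0 + x1 + x2 + x3 = 0 := hx
      rw [hx0] at this; linear_combination this
    apply Subtype.ext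
    show ((0 : F), x1, x2, -x1 - x2) = (x0, x1, x2, x3)
    rw [hx0, h3]
  right_inv p := rfl

end RPS

open RPS in
/-- `𝔐₀ = {x ∈ 𝔐 : tr x = 0, Sc x = 0}` is a 2-dimensional `F`-subspace of `𝔐`
and is an ideal of `𝔐`. -/
theorem M0_is_two_dim_ideal {F : Type*} [Field F] :
    ∃ W : Submodule F (RPS F),
      (W : Set (RPS F)) = {x | tr x = 0 ∧ sc x = 0} ∧
      Module.finrank F W = 2 ∧
      ∀ x ∈ W, ∀ y : RPS F, x * y ∈ W ∧ y * x ∈ W := by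
  refine ⟨M0, rfl, ?_, ?_⟩
  · rw [(e (F := F)).finrank_eq]
    simp
  · rintro ⟨x0, x1, x2, x3⟩ ⟨hx, hx'⟩ ⟨y0, y1, y2, y3⟩
    simp only [tr, sc, cP, cR, cS] at hx hx'
    subst hx'
    constructor <;>
      refine ⟨?_, ?_⟩ <;>
      erw [mul_def'] <;>
      simp only [mul_def', mk4, tr, sc, cP, cR, cS, M0,
        Submodule.mem_mk, Set.mem_setOf_eq] <;>
      first
        | linear_combination (y0 + y1 + y2 + y3) * hx
        | ring1
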